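/- For every real p, the curve d(ω) = cos(ω/2) + sin(ω/2)k + (p/2)sin(ω)·ε(sin(ω/2) − cos(ω/2)k) satisfies (1 + pε·cos²(ω/2))·d(ω) = cos(ω/2)(1 + pε) + sin(ω/2)k for all ω; consequently d(ω) always lies in the real span of the two dual quaternions 1 + pε and k. -/

import Mathlib

open TrivSqZeroExt Real

noncomputable section
set_option maxRecDepth 8000

/-- The quaternion unit `k`. -/
def kQ : Quaternion ℝ := ⟨0, 0, 0, 1⟩

/-- The vertical Darboux motion `d(ω)` with amplitude `p`. -/
def darboux (p : ℝ) (ω : ℝ) : DualNumber (Quaternion ℝ) :=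
  inl ((cos (ω / 2) : ℝ) + (sin (ω / 2) : ℝ) • kQ)
    + inr ((p / 2 * sin ω) • ((sin (ω / 2) : ℝ) • (1 : Quaternion ℝ) - (cos (ω / 2)) • kQ))

lemma key (p : ℝ) (ω : ℝ) :
    ((1 : DualNumber (Quaternion ℝ)) + (p * cos (ω / 2) ^ 2) • DualNumber.eps)
        * darboux p ω
      = cos (ω / 2) • ((1 : DualNumber (Quaternion ℝ)) + p • DualNumber.eps)
        + sin (ω / 2) • inl kQ := by
  have hs : sin ω = 2 * sin (ω / 2) * cos (ω / 2) := by
    rw [show ω = 2 * (ω / 2) by ring, sin_two_mul]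
    ring_nf
  have hsc : sin (ω * (1/2)) ^ 2 + cos (ω * (1/2)) ^ 2 = 1 := sin_sq_add_cos_sq _
  have h2 : ω / 2 = ω * (1/2) := by ring
  ext : 1
  · simp only [darboux, DualNumber.eps, fst_mul, fst_add, fst_inl, fst_inr, fst_one,
      fst_smul, smul_zero, add_zero, one_mul, smul_add, smul_eq_mul, mul_one]
    rw [show ((cos (ω/2) : ℝ) : Quaternion ℝ) = cos (ω/2) • (1 : Quaternion ℝ) by
      ext <;> simp [Quaternion.re_one, Quaternion.imI_one, Quaternion.imJ_one, Quaternion.imK_one]]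
  · simp only [darboux, DualNumber.eps, snd_mul, snd_add, snd_inl, snd_inr, snd_one,
      fst_mul, fst_add, fst_inl, fst_inr, fst_one, fst_smul, snd_smul, smul_zero,
      add_zero, zero_add, one_smul, smul_add, MulOpposite.op_smul, MulOpposite.op_one, smul_smul, hs]
    have hkq : kQ.re = 0 ∧ kQ.imI = 0 ∧ kQ.imJ = 0 ∧ kQ.imK = 1 := ⟨rfl, rfl, rfl, rfl⟩
    have hq : ∀ (a b : Quaternion ℝ) (c : ℝ),
        (a + b).re = a.re + b.re ∧ (a + b).imI = a.imI + b.imI ∧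
        (a + b).imJ = a.imJ + b.imJ ∧ (a + b).imK = a.imK + b.imK ∧
        (a - b).re = a.re - b.re ∧ (a - b).imI = a.imI - b.imI ∧
        (a - b).imJ = a.imJ - b.imJ ∧ (a - b).imK = a.imK - b.imK ∧
        (c • a).re = c * a.re ∧ (c • a).imI = c * a.imI ∧
        (c • a).imJ = c * a.imJ ∧ (c • a).imK = c * a.imK ∧
        ((c : Quaternion ℝ)).re = c ∧ ((c : Quaternion ℝ)).imI = 0 ∧
        ((c : Quaternion ℝ)).imJ = 0 ∧ ((c : Quaternion ℝ)).imK = 0 ∧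
        (1 : Quaternion ℝ).re = 1 ∧ (1 : Quaternion ℝ).imI = 0 ∧
        (1 : Quaternion ℝ).imJ = 0 ∧ (1 : Quaternion ℝ).imK = 0 := fun _ _ _ =>
      ⟨rfl, rfl, rfl, rfl, rfl, rfl, rfl, rfl, rfl, rfl, rfl, rfl, rfl, rfl, rfl, rfl, rfl, rfl, rfl, rfl⟩
    ext <;> simp [hkq, hq, Quaternion.ext_iff, Quaternion.im_one, Quaternion.re_one, Quaternion.imI_one, Quaternion.imJ_one,
      Quaternion.imK_one, Quaternion.re_smul, Quaternion.imI_smul, Quaternion.imJ_smul, Quaternion.imK_smul, MulOpposite.smul_eq_mul_unop]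
    all_goals try rw [h2]
    all_goals
      generalize hS : sin (ω * (1/2)) = S at *
    all_goals
      generalize hC : cos (ω * (1/2)) = C at *
    all_goals
      first
        | ring1
        | linear_combination (p * C) * hsc

/-- `(1 + pε·cos²(ω/2)) · d(ω) = cos(ω/2)(1 + pε) + sin(ω/2)k`; consequently
`d(ω)` is projectively a point of the real span of `1 + pε` and `k`, i.e. the
vertical Darboux motion is a straight line in `P³(D)`. -/
theorem darboux_is_straight_line (p : ℝ) (ω : ℝ) :
    ((1 : DualNumber (Quaternion ℝ)) + (p * cos (ω / 2) ^ 2) • DualNumber.eps)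
        * darboux p ω
      = cos (ω / 2) • ((1 : DualNumber (Quaternion ℝ)) + p • DualNumber.eps)
        + sin (ω / 2) • inl kQ ∧
    ∃ w : (DualNumber (Quaternion ℝ))ˣ,
      (w : DualNumber (Quaternion ℝ)) * darboux p ω ∈
        Submodule.span ℝ
          ({(1 : DualNumber (Quaternion ℝ)) + p • DualNumber.eps, inl kQ} :
            Set (DualNumber (Quaternion ℝ))) := by
  refine ⟨key p ω, ?_⟩
  have heps : ∀ a : ℝ, (a • DualNumber.eps : DualNumber (Quaternion ℝ)) = inr (a • 1) := by
    intro a; rw [DualNumber.eps, ← inr_smul]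
  have h0 : ((p * cos (ω / 2) ^ 2) • DualNumber.eps : DualNumber (Quaternion ℝ)) *
      ((p * cos (ω / 2) ^ 2) • DualNumber.eps) = 0 := by
    rw [heps, inr_mul_inr]
  have hmul : ((1 : DualNumber (Quaternion ℝ)) + (p * cos (ω / 2) ^ 2) • DualNumber.eps)
      * ((1 : DualNumber (Quaternion ℝ)) - (p * cos (ω / 2) ^ 2) • DualNumber.eps) = 1 ∧
      ((1 : DualNumber (Quaternion ℝ)) - (p * cos (ω / 2) ^ 2) • DualNumber.eps)
      * ((1 : DualNumber (Quaternion ℝ)) + (p * cos (ω / 2) ^ 2) • DualNumber.eps) = 1 := by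
    constructor <;> · simp [mul_sub, mul_add, add_mul, sub_mul, h0]
  refine ⟨⟨_, _, hmul.1, hmul.2⟩, ?_⟩
  rw [show ((⟨_, _, hmul.1, hmul.2⟩ : (DualNumber (Quaternion ℝ))ˣ) :
      DualNumber (Quaternion ℝ)) = (1 : DualNumber (Quaternion ℝ))
      + (p * cos (ω / 2) ^ 2) • DualNumber.eps from rfl, key p ω]
  exact Submodule.add_mem _
    (Submodule.smul_mem _ _ (Submodule.subset_span (Set.mem_insert _ _)))
    (Submodule.smul_mem _ _ (Submodule.subset_span (Set.mem_insert_of_mem _ rfl)))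

end
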